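/- For graphs H₁, …, H_t and a graph F on n vertices that contains no H_i as a subgraph for any i, the join K_{t−1} ∇ F contains no subgraph isomorphic to the disjoint union H₁ ∪ ⋯ ∪ H_t. -/

import Mathlib

open SimpleGraph

/-- The join `G ∇ H` of two graphs: disjoint union plus all edges between the two parts. -/
def graphJoin {α β : Type*} (G : SimpleGraph α) (H : SimpleGraph β) :
    SimpleGraph (α ⊕ β) where
  Adj x y :=
    match x, y with
    | Sum.inl a, Sum.inl a' => G.Adj a a'
    | Sum.inr b, Sum.inr b' => H.Adj b b'
    | Sum.inl _, Sum.inr _ => True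
    | Sum.inr _, Sum.inl _ => True
  symm := by constructor; rintro (a | b) (a' | b') h <;> simp_all <;> exact h.symm
  loopless := by constructor; rintro (a | b) h <;> simp_all

/-- `H` is contained in `G` as a subgraph: there is an injective graph homomorphism. -/
def Contains {α β : Type*} (H : SimpleGraph α) (G : SimpleGraph β) : Prop :=
  ∃ f : α → β, Function.Injective f ∧ ∀ ⦃a b⦄, H.Adj a b → G.Adj (f a) (f b)

/-- For graphs `H₁, …, H_t` and a graph `F` that contains no `H_i` as a
subgraph for any `i`, the join `K_{t−1} ∇ F` contains no subgraph isomorphic to the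
disjoint union `H₁ ∪ ⋯ ∪ H_t` (i.e. there are no pairwise vertex-disjoint copies of the
`H_i` in the join). -/
theorem join_complete_free_of_union {α : Type*} [Fintype α] (t : ℕ) (ht : 1 ≤ t)
    (W : Fin t → Type*) [∀ i, Fintype (W i)] (H : ∀ i, SimpleGraph (W i))
    (F : SimpleGraph α) (hfree : ∀ i, ¬Contains (H i) F) :
    ¬∃ f : ∀ i, W i → (Fin (t - 1) ⊕ α),
      (∀ i, Function.Injective (f i)) ∧
      (∀ i, ∀ a b, (H i).Adj a b →
        (graphJoin (⊤ : SimpleGraph (Fin (t - 1))) F).Adj (f i a) (f i b)) ∧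
      (∀ i j, i ≠ j → ∀ a b, f i a ≠ f j b) := by
  rintro ⟨f, hinj, hadj, hdisj⟩
  have key : ∀ i, ∃ a k, f i a = Sum.inl k := by
    intro i
    by_contra h
    push_neg at h
    have hall : ∀ a, ∃ b, f i a = Sum.inr b := by
      intro a
      cases h' : f i a with
      | inl k => exact absurd h' (h a k)
      | inr b => exact ⟨b, rfl⟩
    choose g hg using hall
    apply hfree i
    refine ⟨g, ?_, ?_⟩
    · intro a b hab
      apply hinj i
      rw [hg a, hg b, hab]
    · intro a b hab
      have h2 := hadj i a b hab
      rw [hg a, hg b] at h2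
      exact h2
  choose a k hk using key
  have kinj : Function.Injective k := by
    intro i j hij
    by_contra hne
    exact hdisj i j hne (a i) (a j) (by rw [hk i, hk j, hij])
  have hle := Fintype.card_le_of_injective k kinj
  simp [Fintype.card_fin] at hle
  omega
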